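/- Let q be a real number with q > 0 and q ≠ 1, let n ≥ d ≥ 2 be integers, and let W(x,y) = x^n + Σ_{i=d}^{n} A_i x^{n-i} y^i be a homogeneous polynomial with complex coefficients, A_d ≠ 0, satisfying W((x+(q-1)y)/√q, (x-y)/√q) = -W(x,y) identically. Let P(T) be the zeta polynomial of W. Then P has degree exactly 2g := n + 2 - 2d, and P satisfies the functional equation P(T) = -P(1/(qT)) · q^{(n+2-2d)/2} · T^{n+2-2d} for all nonzero T ∈ ℂ. -/

import Mathlib

open Finset Polynomial in
private lemma sumC_coeff (f : ℕ → ℂ) (N k : ℕ) :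
    (∑ i ∈ range N, C (f i) * X ^ i).coeff k = if k < N then f k else 0 := by
  rw [finset_sum_coeff]
  simp only [coeff_C_mul, coeff_X_pow, mul_ite, mul_one, mul_zero]
  rw [Finset.sum_ite_eq (range N) k f]
  simp [mem_range]

private noncomputable def Ee (q : ℂ) (P : Polynomial ℂ) (r : ℕ) : ℂ :=
  ∑ m ∈ Finset.range (r+1), P.coeff m * (q ^ (r - m + 1) - 1)

open Finset Polynomial in
private lemma zeta_extractP (q : ℂ) (hq1C : q - 1 ≠ 0)
    (n d : ℕ) (A : ℕ → ℂ) (P : Polynomial ℂ)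
    (hP : ∀ x y : ℂ,
      (∑ m ∈ Finset.range (n - d + 1), ∑ k ∈ Finset.range (n - d - m + 1),
          P.coeff m * (n.choose k : ℂ) * y ^ (n - k) * (x - y) ^ k *
            ∑ j ∈ Finset.range (n - d - m - k + 1), q ^ j)
        = ((∑ i ∈ Finset.range (n + 1), A i * x ^ (n - i) * y ^ i) - x ^ n) / (q - 1)) :
    ∀ k, (∑ m ∈ range (n-d+1),
      (if k < n-d-m+1 then (P.coeff m * (n.choose k : ℂ) * (∑ j ∈ range (n-d-m-k+1), q^j)) * (q-1) else 0))
      = (∑ i ∈ range (n+1), A i * ((n-i).choose k : ℂ)) - (n.choose k : ℂ) := by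
  set pL : Polynomial ℂ := ∑ m ∈ range (n-d+1), ∑ k ∈ range (n-d-m+1),
      C ((P.coeff m * (n.choose k : ℂ) * (∑ j ∈ range (n-d-m-k+1), q^j)) * (q-1)) * X^k with hpL
  set pR : Polynomial ℂ := (∑ i ∈ range (n+1), C (A i) * (X+1)^(n-i)) - (X+1)^n with hpR
  have heval : ∀ x : ℂ, pL.eval x = pR.eval x := by
    intro x
    have h := hP (x+1) 1
    rw [eq_div_iff hq1C] at h
    simp only [one_pow, mul_one, add_sub_cancel_right] at h
    rw [hpL, hpR]
    simp only [eval_finset_sum, eval_sub, eval_add, eval_pow, eval_mul, eval_C, eval_X, eval_one]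
    rw [← h, Finset.sum_mul]
    refine Finset.sum_congr rfl fun m _ => ?_
    rw [Finset.sum_mul]
    refine Finset.sum_congr rfl fun k _ => ?_
    ring
  have hcoeff : ∀ k, pL.coeff k = pR.coeff k := fun k =>
    congrArg (fun p => Polynomial.coeff p k) (Polynomial.funext heval)
  intro k
  have hpRcoeff : pR.coeff k = (∑ i ∈ range (n+1), A i * ((n-i).choose k : ℂ)) - (n.choose k : ℂ) := by
    rw [hpR]
    simp [finset_sum_coeff, coeff_C_mul, coeff_X_add_one_pow]
  have hpLcoeff : pL.coeff k = ∑ m ∈ range (n-d+1),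
      (if k < n-d-m+1 then (P.coeff m * (n.choose k : ℂ) * (∑ j ∈ range (n-d-m-k+1), q^j)) * (q-1) else 0) := by
    rw [hpL, finset_sum_coeff]
    exact Finset.sum_congr rfl fun m _ => sumC_coeff _ _ _
  rw [← hpLcoeff, hcoeff, hpRcoeff]

open Finset Polynomial in
private lemma zeta_hIe (q : ℂ)
    (n d : ℕ) (A : ℕ → ℂ) (P : Polynomial ℂ)
    (hext : ∀ k, (∑ m ∈ range (n-d+1),
      (if k < n-d-m+1 then (P.coeff m * (n.choose k : ℂ) * (∑ j ∈ range (n-d-m-k+1), q^j)) * (q-1) else 0))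
      = (∑ i ∈ range (n+1), A i * ((n-i).choose k : ℂ)) - (n.choose k : ℂ)) :
    ∀ k, k ≤ n - d → (∑ i ∈ range (n+1), A i * ((n-i).choose k : ℂ))
      = (n.choose k : ℂ) * (1 + Ee q P (n-d-k)) := by
  intro k hk
  have h := hext k
  rw [← Finset.sum_subset (Finset.range_subset_range.mpr (by omega : n-d-k+1 ≤ n-d+1))
      (fun m hbig hm => by
        rw [mem_range] at hbig
        rw [mem_range, not_lt] at hm
        rw [if_neg (by omega)])] at h
  have h3 : ∑ m ∈ range (n-d-k+1), (n.choose k:ℂ) * (P.coeff m * (q^(n-d-k-m+1) - 1))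
      = (∑ i ∈ range (n+1), A i * ((n-i).choose k : ℂ)) - (n.choose k:ℂ) := by
    rw [← h]
    refine Finset.sum_congr rfl fun m hm => ?_
    rw [mem_range] at hm
    rw [if_pos (by omega), show n-d-m-k = n-d-k-m by omega, mul_assoc, geom_sum_mul]
    ring
  rw [eq_sub_iff_add_eq] at h3
  rw [Ee, mul_add, mul_one, Finset.mul_sum, ← h3, add_comm]

open Finset Polynomial in
private lemma zeta_hII (q : ℂ)
    (n d : ℕ) (A : ℕ → ℂ) (P : Polynomial ℂ)
    (hext : ∀ k, (∑ m ∈ range (n-d+1),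
      (if k < n-d-m+1 then (P.coeff m * (n.choose k : ℂ) * (∑ j ∈ range (n-d-m-k+1), q^j)) * (q-1) else 0))
      = (∑ i ∈ range (n+1), A i * ((n-i).choose k : ℂ)) - (n.choose k : ℂ)) :
    ∀ k, n - d < k → (∑ i ∈ range (n+1), A i * ((n-i).choose k : ℂ)) = (n.choose k : ℂ) := by
  intro k hk
  have h := hext k
  rw [Finset.sum_eq_zero (fun m hm => by
    rw [mem_range] at hm
    rw [if_neg (by omega)])] at h
  exact sub_eq_zero.mp h.symm

open Finset Polynomial in
private lemma zeta_hIII (q : ℝ) (hq0 : 0 < q)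
    (n d : ℕ) (hdn : d ≤ n) (A : ℕ → ℂ)
    (hanti : ∀ x y : ℂ,
      (∑ i ∈ Finset.range (n + 1),
        A i * ((x + ((q : ℂ) - 1) * y) / (Real.sqrt q : ℂ)) ^ (n - i) *
          ((x - y) / (Real.sqrt q : ℂ)) ^ i)
        = -∑ i ∈ Finset.range (n + 1), A i * x ^ (n - i) * y ^ i) :
    ∀ k, k ≤ n → (q:ℂ)^(n-k) * (∑ i ∈ range (n+1), A i * ((n-i).choose (n-k) : ℂ))
        = -((Real.sqrt q : ℂ))^n * (∑ i ∈ range (n+1), A i * ((n-i).choose k : ℂ)) := by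
  set s : ℂ := (Real.sqrt q : ℂ) with hs
  have hs0 : s ≠ 0 := by
    rw [hs]
    exact_mod_cast (Real.sqrt_pos.mpr hq0).ne'
  set Bf : ℕ → ℂ := fun k => ∑ i ∈ range (n+1), A i * ((n-i).choose k : ℂ) with hBf
  have key : ∀ x : ℂ, ∑ i ∈ range (n+1), A i * (x + (q:ℂ))^(n-i) * x^i
      = -(s^n) * ∑ i ∈ range (n+1), A i * (x+1)^(n-i) := by
    intro x
    have h := hanti (x+1) 1
    simp only [mul_one, one_pow, add_sub_cancel_right] at h
    have h2 : ∀ i ∈ range (n+1),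
        A i * ((x + 1 + ((q:ℂ) - 1)) / s) ^ (n - i) * (x / s) ^ i
          = (A i * (x + (q:ℂ))^(n-i) * x^i) / s^n := by
      intro i hi
      rw [mem_range] at hi
      have hss : s^(n-i) * s^i = s^n := by rw [← pow_add]; congr 1; omega
      rw [div_pow, div_pow, show x + 1 + ((q:ℂ)-1) = x + (q:ℂ) by ring, ← hss]
      field_simp
    rw [Finset.sum_congr rfl h2, ← Finset.sum_div, div_eq_iff (pow_ne_zero n hs0)] at h
    rw [h]
    ring
  set pL : Polynomial ℂ := ∑ i ∈ range (n+1), C (A i) * (X + C (q:ℂ))^(n-i) * X^i with hpL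
  set pR : Polynomial ℂ := C (-(s^n)) * ∑ i ∈ range (n+1), C (A i) * (X+1)^(n-i) with hpR
  have heval : ∀ x : ℂ, pL.eval x = pR.eval x := by
    intro x
    rw [hpL, hpR]
    simp only [eval_mul, eval_finset_sum, eval_add, eval_pow, eval_C, eval_X, eval_one]
    exact key x
  have hcoeff : ∀ k, pL.coeff k = pR.coeff k := fun k =>
    congrArg (fun p => Polynomial.coeff p k) (Polynomial.funext heval)
  intro k hk
  have hL : pL.coeff k = (q:ℂ)^(n-k) * Bf (n-k) := by
    rw [hpL, finset_sum_coeff, hBf, Finset.mul_sum]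
    refine Finset.sum_congr rfl fun i hi => ?_
    rw [mem_range] at hi
    rw [coeff_mul_X_pow', coeff_C_mul, coeff_X_add_C_pow]
    by_cases hik : i ≤ k
    · rw [if_pos hik, show n - i - (k - i) = n - k by omega]
      have : (n-i).choose (k-i) = (n-i).choose (n-k) := by
        rw [show n - k = (n-i) - (k-i) by omega, Nat.choose_symm (by omega)]
      rw [this]; ring
    · rw [if_neg hik, Nat.choose_eq_zero_of_lt (by omega : n - i < n - k)]
      simp
  have hR : pR.coeff k = -(s^n) * Bf k := by
    have h4 : (∑ i ∈ range (n+1), C (A i) * (X+1)^(n-i)).coeff k = Bf k := by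
      rw [finset_sum_coeff, hBf]
      exact Finset.sum_congr rfl fun i _ => by rw [coeff_C_mul, coeff_X_add_one_pow]
    rw [hpR, coeff_C_mul, h4]
  rw [← hL, ← hR, hcoeff]

open Finset Polynomial in
private lemma zeta_contra (q : ℝ) (hq0 : 0 < q)
    (n d : ℕ) (hd2 : 2 ≤ d) (hdn : d ≤ n) (hbad : n + 1 < 2*d) (Bf : ℕ → ℂ)
    (hII : ∀ k, n - d < k → Bf k = (n.choose k : ℂ))
    (hIII : ∀ k, k ≤ n → (q:ℂ)^(n-k) * Bf (n-k) = -(Real.sqrt q : ℂ)^n * Bf k) :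
    False := by
  have h := hIII (d-1) (by omega)
  rw [hII (n-(d-1)) (by omega), hII (d-1) (by omega), show n-(d-1) = n-d+1 by omega] at h
  have hr : q^(n-d+1) * ((n.choose (n-d+1) : ℕ) : ℝ)
      = -(Real.sqrt q)^n * ((n.choose (d-1) : ℕ) : ℝ) := by exact_mod_cast h
  have h1 : (0:ℝ) < q^(n-d+1) := pow_pos hq0 _
  have h2 : (0:ℝ) < (Real.sqrt q)^n := pow_pos (Real.sqrt_pos.mpr hq0) _
  have h3 : (0:ℝ) < ((n.choose (n-d+1) : ℕ) : ℝ) := Nat.cast_pos.mpr (Nat.choose_pos (by omega))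
  have h4 : (0:ℝ) < ((n.choose (d-1) : ℕ) : ℝ) := Nat.cast_pos.mpr (Nat.choose_pos (by omega))
  nlinarith

open Finset Polynomial in
private lemma zeta_hIV (q s : ℂ) (hs0 : s ≠ 0)
    (n d : ℕ) (hd2 : 2 ≤ d) (hdn : d ≤ n) (hn : 2*d ≤ n+1)
    (P : Polynomial ℂ) (Bf : ℕ → ℂ)
    (hIe : ∀ k, k ≤ n - d → Bf k = (n.choose k : ℂ) * (1 + Ee q P (n-d-k)))
    (hII : ∀ k, n - d < k → Bf k = (n.choose k : ℂ))
    (hIII : ∀ k, k ≤ n → q^(n-k) * Bf (n-k) = -s^n * Bf k) :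
    ∀ k, k < d → k ≤ n - d → q^(n-k) = -s^n * (1 + Ee q P (n-d-k)) := by
  intro k h1 h2
  have h3 := hIII k (by omega)
  rw [hII (n-k) (by omega), hIe k h2, Nat.choose_symm (show k ≤ n by omega)] at h3
  have hch : ((n.choose k : ℕ) : ℂ) ≠ 0 := Nat.cast_ne_zero.mpr (Nat.choose_pos (by omega)).ne'
  exact mul_right_cancel₀ hch (by linear_combination h3)

open Finset Polynomial in
private lemma zeta_tu (q s : ℂ) (hq0 : q ≠ 0) (hq1 : q - 1 ≠ 0) (hs0 : s ≠ 0) (hsq : s^2 = q)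
    (n d : ℕ) (hd2 : 2 ≤ d) (hdn : d ≤ n) (hn : 2*d ≤ n+1)
    (P : Polynomial ℂ)
    (hIV : ∀ k, k < d → k ≤ n - d → q^(n-k) = -s^n * (1 + Ee q P (n-d-k))) :
    (∑ m ∈ range (n+2-2*d+1), P.coeff m) = 1 ∧
    q^(d-1) * (∑ m ∈ range (n+2-2*d+1), P.coeff m * q^(n+2-2*d-m)) = -s^n := by
  set G := n+2-2*d with hG
  have hG1 : 1 ≤ G := by omega
  have Eq1 : q^(n-d+2) = -s^n * (1 + Ee q P G) := by
    have := hIV (d-2) (by omega) (by omega)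
    rw [show n-(d-2) = n-d+2 by omega, show n-d-(d-2) = G by omega] at this
    exact this
  have Eq2 : q^(n-d+1) = -s^n * (1 + Ee q P (G-1)) := by
    have := hIV (d-1) (by omega) (by omega)
    rw [show n-(d-1) = n-d+1 by omega, show n-d-(d-1) = G-1 by omega] at this
    exact this
  have hsn : -s^n ≠ 0 := neg_ne_zero.mpr (pow_ne_zero n hs0)
  have hA1 : Ee q P G = (∑ m ∈ range G, P.coeff m * (q^(G-m+1) - 1)) + P.coeff G * (q - 1) := by
    rw [Ee, Finset.sum_range_succ, show G-G+1 = 1 by omega, pow_one]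
  have hA2 : q * Ee q P (G-1) = ∑ m ∈ range G, P.coeff m * (q^(G-m+1) - q) := by
    rw [Ee, show G-1+1 = G by omega, Finset.mul_sum]
    refine Finset.sum_congr rfl fun m hm => ?_
    rw [mem_range] at hm
    rw [show G-m+1 = (G-1-m+1)+1 by omega, pow_succ]
    ring
  have hA4 : Ee q P G = q * (∑ m ∈ range (G+1), P.coeff m * q^(G-m)) - (∑ m ∈ range (G+1), P.coeff m) := by
    rw [Ee, Finset.mul_sum, ← Finset.sum_sub_distrib]
    refine Finset.sum_congr rfl fun m hm => ?_
    rw [pow_succ]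
    ring
  have hcan : 1 + Ee q P G = q * (1 + Ee q P (G-1)) := by
    apply mul_left_cancel₀ hsn
    rw [← Eq1]
    rw [show n-d+2 = (n-d+1)+1 by omega, pow_succ, Eq2]
    ring
  have htP : (∑ m ∈ range (G+1), P.coeff m) = 1 := by
    have h5 : Ee q P G - q * Ee q P (G-1) = (q-1) * (∑ m ∈ range (G+1), P.coeff m) := by
      rw [hA1, hA2, Finset.sum_range_succ, mul_add, add_sub_right_comm, ← Finset.sum_sub_distrib,
        Finset.mul_sum]
      rw [Finset.sum_congr rfl (fun m _ => by ring :
        ∀ m ∈ range G, P.coeff m * (q^(G-m+1) - 1) - P.coeff m * (q^(G-m+1) - q) = (q-1) * P.coeff m)]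
      ring
    have h6 : Ee q P G - q * Ee q P (G-1) = q - 1 := by linear_combination hcan
    have h8 := h5.symm.trans h6
    field_simp at h8
    exact h8
  refine ⟨htP, ?_⟩
  have h7 : q^(n-d+1) = -s^n * (∑ m ∈ range (G+1), P.coeff m * q^(G-m)) := by
    apply mul_left_cancel₀ hq0
    rw [show q * q^(n-d+1) = q^(n-d+2) from by
      rw [show n-d+2 = (n-d+1)+1 by omega]; exact (pow_succ' q (n-d+1)).symm]
    rw [Eq1, hA4, htP]
    ring
  apply mul_left_cancel₀ (pow_ne_zero n hs0)
  rw [show s^n * (-s^n) = -(q^n) from by rw [← hsq]; ring]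
  rw [show s^n * (q^(d-1) * (∑ m ∈ range (G+1), P.coeff m * q^(G-m)))
      = -(q^(d-1) * q^(n-d+1)) from by rw [h7]; ring]
  rw [← pow_add, show d-1+(n-d+1) = n by omega]

open Finset Polynomial in
private lemma zeta_core (q s : ℂ) (hq0 : q ≠ 0) (hq1 : q - 1 ≠ 0) (hs0 : s ≠ 0) (hsq : s^2 = q)
    (n d : ℕ) (hd2 : 2 ≤ d) (hdn : d ≤ n) (hn : 2*d ≤ n+1)
    (P : Polynomial ℂ) (hPdeg : P.degree ≤ (n - d : ℕ)) (Bf : ℕ → ℂ)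
    (hIe : ∀ k, k ≤ n - d → Bf k = (n.choose k : ℂ) * (1 + Ee q P (n-d-k)))
    (hII : ∀ k, n - d < k → Bf k = (n.choose k : ℂ))
    (hIII : ∀ k, k ≤ n → q^(n-k) * Bf (n-k) = -s^n * Bf k)
    (hIV : ∀ k, k < d → k ≤ n - d → q^(n-k) = -s^n * (1 + Ee q P (n-d-k)))
    (htP : (∑ m ∈ range (n+2-2*d+1), P.coeff m) = 1)
    (hud : q^(d-1) * (∑ m ∈ range (n+2-2*d+1), P.coeff m * q^(n+2-2*d-m)) = -s^n) :
    ∀ m, P.coeff m = (∑ m' ∈ range (n+2-2*d+1),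
        C (-(s^(2*m') * P.coeff (n+2-2*d-m')) / s^(n+2-2*d)) * X^m').coeff m := by
  set G := n+2-2*d with hG
  have hG1 : 1 ≤ G := by omega
  have hGnd : G ≤ n - d := by omega
  have hsn : -s^n ≠ 0 := neg_ne_zero.mpr (pow_ne_zero n hs0)
  set Qp : Polynomial ℂ := ∑ m' ∈ range (G+1), C (-(s^(2*m') * P.coeff (G-m')) / s^G) * X^m' with hQp
  have hQc : ∀ m, Qp.coeff m = if m < G+1 then -(s^(2*m) * P.coeff (G-m)) / s^G else 0 :=
    fun m => sumC_coeff _ _ _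
  have hQS : ∀ m, m ≤ G → -s^n * Qp.coeff m = q^(d-1+m) * P.coeff (G-m) := by
    intro m hm
    rw [hQc, if_pos (by omega)]
    have hpow : s^n * s^(2*m) = q^(d-1+m) * s^G := by
      rw [← hsq, ← pow_mul, ← pow_add, ← pow_add]
      congr 1
      omega
    field_simp
    linear_combination P.coeff (G-m) * hpow
  have hBig : ∀ r : ℕ, (∑ j ∈ range (G+1), P.coeff j * (q^(d+r) - q^(d-1+(G-j)))) = q^(d+r) + s^n := by
    intro r
    have h1 : (∑ j ∈ range (G+1), P.coeff j * (q^(d+r) - q^(d-1+(G-j))))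
        = (∑ j ∈ range (G+1), P.coeff j) * q^(d+r)
          - q^(d-1) * (∑ j ∈ range (G+1), P.coeff j * q^(G-j)) := by
      rw [Finset.sum_mul, Finset.mul_sum, ← Finset.sum_sub_distrib]
      refine Finset.sum_congr rfl fun j hj => ?_
      rw [pow_add]
      ring
    rw [h1, htP, hud]
    ring
  have hRefl : ∀ r : ℕ, ∑ m ∈ range (G+1), P.coeff (G-m) * (q^(d+r) - q^(d-1+m))
      = ∑ j ∈ range (G+1), P.coeff j * (q^(d+r) - q^(d-1+(G-j))) := by
    intro r
    rw [← Finset.sum_range_reflect (fun j => P.coeff j * (q^(d+r) - q^(d-1+(G-j)))) (G+1)]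
    refine Finset.sum_congr rfl fun m hm => ?_
    rw [mem_range] at hm
    rw [show G+1-1-m = G-m by omega, show G-(G-m) = m by omega]
  have hterm : ∀ r m, m ≤ G → m ≤ r →
      -s^n * (Qp.coeff m * (q^(r-m+1) - 1)) = P.coeff (G-m) * (q^(d+r) - q^(d-1+m)) := by
    intro r m h1 h2
    rw [← mul_assoc, hQS m h1, show d+r = (d-1+m)+(r-m+1) by omega, pow_add]
    ring
  have hEQ : ∀ r, r ≤ n - d →
      (∑ m ∈ range (r+1), Qp.coeff m * (q^(r-m+1) - 1)) = Ee q P r := by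
    intro r hr
    apply mul_left_cancel₀ hsn
    by_cases hA : r + 2 ≤ G
    · -- Case A
      set ρ := G-2-r with hρ
      have hstep1 : -s^n * (∑ m ∈ range (r+1), Qp.coeff m * (q^(r-m+1) - 1))
          = ∑ m ∈ range (r+1), P.coeff (G-m) * (q^(d+r) - q^(d-1+m)) := by
        rw [Finset.mul_sum]
        refine Finset.sum_congr rfl fun m hm => ?_
        rw [mem_range] at hm
        exact hterm r m (by omega) (by omega)
      have hIco : ∑ m ∈ range (r+1), P.coeff (G-m) * (q^(d+r) - q^(d-1+m))
          = ∑ j ∈ Finset.Ico (G-r) (G+1), P.coeff j * (q^(d+r) - q^(d-1+(G-j))) := by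
        refine Finset.sum_nbij' (fun m => G - m) (fun j => G - j) ?_ ?_ ?_ ?_ ?_
        · intro m hm; rw [mem_range] at hm; rw [Finset.mem_Ico]; omega
        · intro j hj; rw [Finset.mem_Ico] at hj; rw [mem_range]; omega
        · intro m hm; rw [mem_range] at hm; omega
        · intro j hj; rw [Finset.mem_Ico] at hj; omega
        · intro m hm; rw [mem_range] at hm; rw [show G-(G-m) = m by omega]
      have hsub : ∑ j ∈ Finset.Ico (G-r) (G+1), P.coeff j * (q^(d+r) - q^(d-1+(G-j)))
          = (∑ j ∈ range (G+1), P.coeff j * (q^(d+r) - q^(d-1+(G-j))))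
            - (∑ j ∈ range (G-r), P.coeff j * (q^(d+r) - q^(d-1+(G-j)))) := by
        rw [Finset.sum_Ico_eq_sub _ (by omega)]
      have htail : (∑ j ∈ range (G-r), P.coeff j * (q^(d+r) - q^(d-1+(G-j))))
          = -(q^(d+r)) * Ee q P ρ := by
        rw [show G-r = (ρ+1)+1 by omega, Finset.sum_range_succ]
        rw [show d-1+(G-(ρ+1)) = d+r by omega, sub_self, mul_zero, add_zero]
        rw [Ee, Finset.mul_sum]
        refine Finset.sum_congr rfl fun j hj => ?_
        rw [mem_range] at hj
        rw [show d-1+(G-j) = (d+r)+(ρ-j+1) by omega, pow_add]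
        ring
      have hch : ((n.choose (d+r) : ℕ) : ℂ) ≠ 0 :=
        Nat.cast_ne_zero.mpr (Nat.choose_pos (by omega)).ne'
      have e1 : Bf (n-d-r) = (n.choose (d+r) : ℂ) * (1 + Ee q P r) := by
        rw [hIe (n-d-r) (by omega), show n-d-(n-d-r) = r by omega,
          show n-d-r = n-(d+r) by omega, Nat.choose_symm (by omega)]
      have e2 : Bf (d+r) = (n.choose (d+r) : ℂ) * (1 + Ee q P ρ) := by
        rw [hIe (d+r) (by omega), show n-d-(d+r) = ρ by omega]
      have h3 := hIII (n-d-r) (by omega)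
      rw [show n-(n-d-r) = d+r by omega, e1, e2] at h3
      have hAhyp : q^(d+r) * (1 + Ee q P ρ) = -s^n * (1 + Ee q P r) :=
        mul_right_cancel₀ hch (by linear_combination h3)
      rw [hstep1, hIco, hsub, htail, hBig r]
      linear_combination hAhyp
    · -- Cases B
      have hEr : q^(d+r) = -s^n * (1 + Ee q P r) := by
        have := hIV (n-d-r) (by omega) (by omega)
        rw [show n-(n-d-r) = d+r by omega, show n-d-(n-d-r) = r by omega] at this
        exact this
      have hgoal2 : -s^n * Ee q P r = q^(d+r) + s^n := by linear_combination -hEr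
      rw [hgoal2]
      by_cases hB : G ≤ r
      · rw [← Finset.sum_subset (Finset.range_subset_range.mpr (by omega : G+1 ≤ r+1))
            (fun m hm1 hm2 => by
              rw [mem_range, not_lt] at hm2
              rw [hQc, if_neg (by omega), zero_mul])]
        rw [Finset.mul_sum]
        have hc2 : ∑ m ∈ range (G+1), -s^n * (Qp.coeff m * (q^(r-m+1) - 1))
            = ∑ m ∈ range (G+1), P.coeff (G-m) * (q^(d+r) - q^(d-1+m)) :=
          Finset.sum_congr rfl (fun m hm => by
            rw [mem_range] at hm
            exact hterm r m (by omega) (by omega))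
        rw [hc2, hRefl r, hBig r]
      · have hr1 : r + 1 = G := by omega
        rw [hr1, Finset.mul_sum]
        have hc2 : ∑ m ∈ range G, -s^n * (Qp.coeff m * (q^(r-m+1) - 1))
            = ∑ m ∈ range G, P.coeff (G-m) * (q^(d+r) - q^(d-1+m)) :=
          Finset.sum_congr rfl (fun m hm => by
            rw [mem_range] at hm
            exact hterm r m (by omega) (by omega))
        rw [hc2]
        have hext : ∑ m ∈ range G, P.coeff (G-m) * (q^(d+r) - q^(d-1+m))
            = ∑ m ∈ range (G+1), P.coeff (G-m) * (q^(d+r) - q^(d-1+m)) := by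
          rw [Finset.sum_range_succ, show d-1+G = d+r by omega, sub_self, mul_zero, add_zero]
        rw [hext, hRefl r, hBig r]
  intro m
  induction m using Nat.strong_induction_on with
  | _ m IH =>
    by_cases hm : m ≤ n - d
    · have h1 := hEQ m hm
      rw [Ee, Finset.sum_range_succ, Finset.sum_range_succ] at h1
      have hc3 : ∑ m' ∈ range m, Qp.coeff m' * (q^(m-m'+1) - 1)
          = ∑ m' ∈ range m, P.coeff m' * (q^(m-m'+1) - 1) :=
        Finset.sum_congr rfl (fun m' hm' => by
          rw [mem_range] at hm'
          rw [← IH m' hm'])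
      rw [hc3] at h1
      have h2 : Qp.coeff m * (q^(m-m+1) - 1) = P.coeff m * (q^(m-m+1) - 1) := by
        linear_combination h1
      rw [show m-m+1 = 1 by omega, pow_one] at h2
      exact (mul_right_cancel₀ hq1 h2).symm
    · rw [Polynomial.coeff_eq_zero_of_degree_lt
        (lt_of_le_of_lt hPdeg (by exact_mod_cast Nat.cast_lt.mpr (by omega : n-d < m))),
        hQc, if_neg (by omega)]

open Finset Polynomial in
private lemma zeta_P0 (q : ℂ)
    (n d : ℕ) (hd2 : 2 ≤ d) (hdn : d ≤ n) (A : ℕ → ℂ)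
    (hA0 : A 0 = 1) (hAz : ∀ i, 0 < i → i < d → A i = 0) (hAd : A d ≠ 0)
    (P : Polynomial ℂ)
    (hIe : ∀ k, k ≤ n - d → (∑ i ∈ range (n+1), A i * ((n-i).choose k : ℂ))
      = (n.choose k : ℂ) * (1 + Ee q P (n-d-k))) :
    P.coeff 0 ≠ 0 := by
  have hBfnd : (∑ i ∈ range (n+1), A i * ((n-i).choose (n-d) : ℂ))
      = (n.choose (n-d) : ℂ) + A d := by
    have hterm : ∀ i ∈ range (n+1), A i * ((n-i).choose (n-d) : ℂ)
        = (if i = 0 then ((n.choose (n-d) : ℕ) : ℂ) else 0) + (if i = d then A d else 0) := by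
      intro i hi
      rw [mem_range] at hi
      rcases Nat.lt_trichotomy i d with hlt | rfl | hgt
      · rcases Nat.eq_zero_or_pos i with rfl | hpos
        · rw [hA0, if_pos rfl, if_neg (by omega), one_mul, add_zero, Nat.sub_zero]
        · rw [hAz i hpos hlt, if_neg (by omega), if_neg (by omega), zero_mul, add_zero]
      · rw [if_neg (by omega), if_pos rfl, Nat.choose_self, Nat.cast_one, mul_one, zero_add]
      · rw [if_neg (by omega), if_neg (by omega), Nat.choose_eq_zero_of_lt (by omega : n-i < n-d),
          Nat.cast_zero, mul_zero, add_zero]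
    rw [Finset.sum_congr rfl hterm, Finset.sum_add_distrib,
      Finset.sum_ite_eq' (range (n+1)) 0 (fun _ => ((n.choose (n-d) : ℕ) : ℂ)),
      Finset.sum_ite_eq' (range (n+1)) d (fun _ => A d),
      if_pos (mem_range.mpr (by omega)), if_pos (mem_range.mpr (by omega))]
  have h := hIe (n-d) (le_refl _)
  rw [hBfnd, show n-d-(n-d) = 0 by omega] at h
  have hE0 : Ee q P 0 = P.coeff 0 * (q - 1) := by
    rw [Ee, Finset.sum_range_one, pow_one]
  rw [hE0] at h
  intro hc
  rw [hc, zero_mul, add_zero, mul_one] at h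
  exact hAd (by linear_combination h)

open Finset Polynomial in
private lemma zeta_final (q s : ℂ) (hq0 : q ≠ 0) (hs0 : s ≠ 0) (hsq : s^2 = q)
    (G : ℕ)
    (P : Polynomial ℂ) (hP0 : P.coeff 0 ≠ 0)
    (hcoefQ : ∀ m, m ≤ G → P.coeff m = -(s^(2*m) * P.coeff (G-m)) / s^G)
    (hzero : ∀ m, G < m → P.coeff m = 0) :
    P.degree = (G : ℕ) ∧
      ∀ T : ℂ, T ≠ 0 →
        P.eval T = -P.eval (1 / (q * T)) * s ^ G * T ^ G := by
  have hPG : P.coeff G ≠ 0 := by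
    rw [hcoefQ G (le_refl _), Nat.sub_self]
    exact div_ne_zero (neg_ne_zero.mpr (mul_ne_zero (pow_ne_zero _ hs0) hP0)) (pow_ne_zero _ hs0)
  have hdegle : P.degree ≤ (G : ℕ) := by
    rw [Polynomial.degree_le_iff_coeff_zero]
    intro m hm
    exact hzero m (by exact_mod_cast hm)
  have hdeg : P.degree = (G : ℕ) := Polynomial.degree_eq_of_le_of_coeff_ne_zero hdegle hPG
  refine ⟨hdeg, ?_⟩
  intro T hT
  have hnat : P.natDegree < G + 1 := by
    rw [Polynomial.natDegree_eq_of_degree_eq_some hdeg]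
    omega
  rw [Polynomial.eval_eq_sum_range' hnat, Polynomial.eval_eq_sum_range' hnat]
  rw [← Finset.sum_range_reflect (fun m => P.coeff m * T ^ m) (G+1)]
  have hR : -((∑ i ∈ range (G+1), P.coeff i * (1/(q*T))^i) * s^G * T^G)
      = ∑ i ∈ range (G+1), -(P.coeff i * (1/(q*T))^i * s^G * T^G) := by
    rw [Finset.sum_mul, Finset.sum_mul, Finset.sum_neg_distrib]
  rw [neg_mul, neg_mul, hR]
  refine Finset.sum_congr rfl fun m hm => ?_
  rw [mem_range] at hm
  rw [show G+1-1-m = G-m by omega]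
  have hc := hcoefQ m (by omega)
  have h5 : P.coeff m * s^G = -(s^(2*m) * P.coeff (G-m)) := by
    rw [hc]
    field_simp
  have hTsplit : T^G = T^(G-m) * T^m := by
    rw [← pow_add]
    congr 1
    omega
  have hqm : q^m = s^(2*m) := by rw [← hsq, ← pow_mul]
  rw [div_pow, one_pow, mul_pow, hqm, hTsplit]
  field_simp
  linear_combination h5

/-- Theorem 4.2 (Functional equation).  Let `W(x,y) = x^n + ∑_{i=d}^n A_i x^{n-i} y^i`
(encoded via coefficients `A 0 = 1`, `A i = 0` for `0 < i < d`, `A d ≠ 0`) with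
`n ≥ d ≥ 2`, satisfying `W^{σ_q} = -W`, and let `P` be its zeta polynomial
(the unique polynomial of degree ≤ `n-d` with the defining coefficient property).
Then `P` has degree exactly `2g = n + 2 - 2d` and satisfies
`P(T) = -P(1/(qT)) q^g T^{2g}` (with `q^g = (√q)^{2g}`) for all `T ≠ 0`. -/
theorem zeta_functional_equation (q : ℝ) (hq0 : 0 < q) (hq1 : q ≠ 1)
    (n d : ℕ) (hd2 : 2 ≤ d) (hdn : d ≤ n) (A : ℕ → ℂ)
    (hA0 : A 0 = 1) (hAz : ∀ i, 0 < i → i < d → A i = 0) (hAd : A d ≠ 0)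
    (hanti : ∀ x y : ℂ,
      (∑ i ∈ Finset.range (n + 1),
        A i * ((x + ((q : ℂ) - 1) * y) / (Real.sqrt q : ℂ)) ^ (n - i) *
          ((x - y) / (Real.sqrt q : ℂ)) ^ i)
        = -∑ i ∈ Finset.range (n + 1), A i * x ^ (n - i) * y ^ i)
    (P : Polynomial ℂ) (hPdeg : P.degree ≤ (n - d : ℕ))
    (hP : ∀ x y : ℂ,
      (∑ m ∈ Finset.range (n - d + 1), ∑ k ∈ Finset.range (n - d - m + 1),
          P.coeff m * (n.choose k : ℂ) * y ^ (n - k) * (x - y) ^ k *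
            ∑ j ∈ Finset.range (n - d - m - k + 1), (q : ℂ) ^ j)
        = ((∑ i ∈ Finset.range (n + 1), A i * x ^ (n - i) * y ^ i) - x ^ n) /
            ((q : ℂ) - 1)) :
    P.degree = (n + 2 - 2 * d : ℕ) ∧
      ∀ T : ℂ, T ≠ 0 →
        P.eval T = -P.eval (1 / ((q : ℂ) * T)) *
          (Real.sqrt q : ℂ) ^ (n + 2 - 2 * d) * T ^ (n + 2 - 2 * d) := by
  have hq0C : (q : ℂ) ≠ 0 := by exact_mod_cast hq0.ne'
  have hq1C : (q : ℂ) - 1 ≠ 0 := by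
    simp only [ne_eq, sub_eq_zero]
    exact_mod_cast hq1
  have hs0 : (Real.sqrt q : ℂ) ≠ 0 := by
    exact_mod_cast (Real.sqrt_pos.mpr hq0).ne'
  have hsq : (Real.sqrt q : ℂ)^2 = (q : ℂ) := by
    norm_cast
    exact Real.sq_sqrt hq0.le
  have hext := zeta_extractP (q : ℂ) hq1C n d A P hP
  have hIe := zeta_hIe (q : ℂ) n d A P hext
  have hII := zeta_hII (q : ℂ) n d A P hext
  have hIII := zeta_hIII q hq0 n d hdn A hanti
  by_cases hn : 2*d ≤ n+1
  · have hIV := zeta_hIV (q : ℂ) (Real.sqrt q : ℂ) hs0 n d hd2 hdn hn P _ hIe hII hIII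
    obtain ⟨htP, hud⟩ := zeta_tu (q : ℂ) (Real.sqrt q : ℂ) hq0C hq1C hs0 hsq n d hd2 hdn hn P hIV
    have hPQ := zeta_core (q : ℂ) (Real.sqrt q : ℂ) hq0C hq1C hs0 hsq n d hd2 hdn hn
      P hPdeg _ hIe hII hIII hIV htP hud
    have hcoefQ : ∀ m, m ≤ n+2-2*d → P.coeff m
        = -((Real.sqrt q : ℂ)^(2*m) * P.coeff (n+2-2*d-m)) / (Real.sqrt q : ℂ)^(n+2-2*d) := by
      intro m hm
      rw [hPQ m, sumC_coeff, if_pos (by omega)]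
    have hzero : ∀ m, n+2-2*d < m → P.coeff m = 0 := by
      intro m hm
      rw [hPQ m, sumC_coeff, if_neg (by omega)]
    have hP0 := zeta_P0 (q : ℂ) n d hd2 hdn A hA0 hAz hAd P hIe
    exact zeta_final (q : ℂ) (Real.sqrt q : ℂ) hq0C hs0 hsq (n+2-2*d) P hP0 hcoefQ hzero
  · exact absurd (zeta_contra q hq0 n d hd2 hdn (by omega) _ hII hIII) (fun h => h)
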